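/- Let g : ℝ₊ → ℝ₊ be nonnegative and nondecreasing. Then for every β ∈ ℝ^p, Σ_{i=1}^p min{g(|βᵢ|), 1} = min over ℓ ∈ {0,1,…,p} of ( ℓ + Σ_{i=ℓ+1}^p g(|β_(i)|) ). -/

import Mathlib

open Finset

/-- Absolute values of the entries of `β`, sorted in increasing order. -/
noncomputable def sortAbs {p : ℕ} (β : Fin p → ℝ) : Fin p → ℝ :=
  fun i => |β (Tuple.sort (fun j => |β j|) i)|

/-- `∑_{i=ℓ+1}^p g(|β_(i)|)`: the sum of `g` applied to the `p - ℓ` smallest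
absolute values of the entries of `β`. -/
noncomputable def gTrim {p : ℕ} (g : ℝ → ℝ) (ℓ : ℕ) (β : Fin p → ℝ) : ℝ :=
  ∑ i ∈ Finset.univ.filter (fun i : Fin p => (i : ℕ) < p - ℓ), g (sortAbs β i)

/-- for `g ≥ 0` nondecreasing, for every `β`,
`∑_{i=1}^p min{g(|βᵢ|), 1}` equals the minimum over `ℓ ∈ {0,1,…,p}` of
`ℓ + ∑_{i=ℓ+1}^p g(|β_(i)|)`. -/
theorem clipped_sum_eq_min_trimmed {p : ℕ} (g : ℝ → ℝ)
    (hnonneg : ∀ x, 0 ≤ x → 0 ≤ g x) (hmono : MonotoneOn g (Set.Ici (0 : ℝ)))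
    (β : Fin p → ℝ) :
    IsLeast {v : ℝ | ∃ ℓ : ℕ, ℓ ≤ p ∧ v = (ℓ : ℝ) + gTrim g ℓ β}
      (∑ i, min (g |β i|) 1) := by
  classical
  set a : Fin p → ℝ := fun i => g (sortAbs β i) with ha
  have habs : Monotone (fun i => sortAbs β i) := Tuple.monotone_sort (fun j => |β j|)
  have hnn : ∀ i, (0:ℝ) ≤ sortAbs β i := fun i => abs_nonneg _
  have hamono : Monotone a := fun i j hij =>
    hmono (Set.mem_Ici.mpr (hnn i)) (Set.mem_Ici.mpr (hnn j)) (habs hij)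
  have hsum : (∑ i, min (g |β i|) 1) = ∑ i, min (a i) 1 := by
    rw [← Equiv.sum_comp (Tuple.sort (fun j => |β j|)) (fun i => min (g |β i|) 1)]
    rfl
  have card_filter_lt : ∀ m : ℕ, m ≤ p →
      (Finset.univ.filter (fun i : Fin p => (i : ℕ) < m)).card = m := by
    intro m hmle
    rw [← Fintype.card_subtype]
    exact Fintype.card_fin_lt_of_le hmle
  constructor
  · -- membership
    set m := Fintype.card {i : Fin p // a i ≤ 1} with hm
    have hmle : m ≤ p := by
      rw [hm]
      conv_rhs => rw [← Fintype.card_fin p]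
      exact Fintype.card_subtype_le _
    have hiff : ∀ i : Fin p, (i : ℕ) < m ↔ a i ≤ 1 := fun i =>
      by rw [hm, Fintype.card_subtype]; exact Tuple.lt_card_le_iff_apply_le_of_monotone hamono
    refine ⟨p - m, Nat.sub_le p m, ?_⟩
    have hpm : p - (p - m) = m := Nat.sub_sub_self hmle
    have hfilter : Finset.univ.filter (fun i : Fin p => (i : ℕ) < p - (p - m))
        = Finset.univ.filter (fun i : Fin p => a i ≤ 1) := by
      rw [hpm]
      exact Finset.filter_congr (fun i _ => by simpa using hiff i)
    have hgt : gTrim g (p - m) β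
        = ∑ i ∈ Finset.univ.filter (fun i : Fin p => a i ≤ 1), a i := by
      unfold gTrim
      rw [hfilter]
    rw [hsum, hgt]
    rw [← Finset.sum_filter_add_sum_filter_not Finset.univ (fun i : Fin p => a i ≤ 1)
      (fun i => min (a i) 1)]
    have h1 : ∑ i ∈ Finset.univ.filter (fun i : Fin p => a i ≤ 1), min (a i) 1
        = ∑ i ∈ Finset.univ.filter (fun i : Fin p => a i ≤ 1), a i :=
      Finset.sum_congr rfl (fun i hi => min_eq_left (Finset.mem_filter.mp hi).2)
    have h2 : ∑ i ∈ Finset.univ.filter (fun i : Fin p => ¬ a i ≤ 1), min (a i) 1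
        = ((p - m : ℕ) : ℝ) := by
      rw [Finset.sum_congr rfl (fun i hi =>
        min_eq_right (le_of_lt (lt_of_not_ge (Finset.mem_filter.mp hi).2)) :
        ∀ i ∈ Finset.univ.filter (fun i : Fin p => ¬ a i ≤ 1), min (a i) 1 = 1)]
      rw [Finset.sum_const, nsmul_eq_mul, mul_one]
      have htot := Finset.card_filter_add_card_filter_not
        (s := (Finset.univ : Finset (Fin p))) (p := fun i : Fin p => a i ≤ 1)
      simp only [Finset.card_univ, Fintype.card_fin] at htot
      have hcard : (Finset.univ.filter (fun i : Fin p => a i ≤ 1)).card = m := by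
        rw [← Fintype.card_subtype]
      have hneg : (Finset.univ.filter (fun i : Fin p => ¬ a i ≤ 1)).card = p - m := by
        omega
      rw [hneg]
    rw [h1, h2]
    ring
  · -- lower bound
    rintro v ⟨ℓ, hℓ, rfl⟩
    rw [hsum]
    rw [← Finset.sum_filter_add_sum_filter_not Finset.univ
      (fun i : Fin p => (i : ℕ) < p - ℓ) (fun i => min (a i) 1)]
    have h1 : ∑ i ∈ Finset.univ.filter (fun i : Fin p => (i : ℕ) < p - ℓ), min (a i) 1
        ≤ gTrim g ℓ β :=
      Finset.sum_le_sum (fun i _ => min_le_left _ _)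
    have h2 : ∑ i ∈ Finset.univ.filter (fun i : Fin p => ¬ (i : ℕ) < p - ℓ), min (a i) 1
        ≤ (ℓ : ℝ) := by
      calc ∑ i ∈ Finset.univ.filter (fun i : Fin p => ¬ (i : ℕ) < p - ℓ), min (a i) 1
          ≤ ∑ i ∈ Finset.univ.filter (fun i : Fin p => ¬ (i : ℕ) < p - ℓ), 1 :=
            Finset.sum_le_sum (fun i _ => min_le_right _ _)
        _ = ((Finset.univ.filter (fun i : Fin p => ¬ (i : ℕ) < p - ℓ)).card : ℝ) := by
            rw [Finset.sum_const, nsmul_eq_mul, mul_one]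
        _ ≤ (ℓ : ℝ) := by
            have := Finset.card_filter_add_card_filter_not
              (s := (Finset.univ : Finset (Fin p))) (p := fun i : Fin p => (i : ℕ) < p - ℓ)
            have hc := card_filter_lt (p - ℓ) (Nat.sub_le p ℓ)
            have : (Finset.univ.filter (fun i : Fin p => ¬ (i : ℕ) < p - ℓ)).card = ℓ := by
              simp only [Finset.card_univ, Fintype.card_fin] at this
              omega
            rw [this]
    linarith
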